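/- In the PEV-based Diffusion Mechanism, for every agent i and every report profile θ', agent i's payoff p_i(θ', q_π) does not depend on agent i's own reported distribution f'_i or reported cost c'_i (holding fixed i's reported neighbor set, all other agents' reports, and—if i is selected—i's realized quality q_π). Formally: if two report profiles differ only in agent i's reported f'_i and c'_i, and agent i is selected in both or unselected in both with the same realized quality, then i's payoff is the same under both profiles. -/

import Mathlib

open Finset

/-- An agent's report: a distribution over qualities, a cost, and a set of invited neighbours. -/
structure Report (A : Type*) where
  f : ℝ → ℝ
  c : ℝ
  nbrs : Finset A

/-- Reported expected welfare  E_{f}[Q] - c. -/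
def welfare {A : Type*} (Q : Finset ℝ) (r : Report A) : ℝ :=
  (∑ q ∈ Q, q * r.f q) - r.c

/-- `f` is a probability mass function on the finite quality set `Q`. -/
def IsPMF (Q : Finset ℝ) (f : ℝ → ℝ) : Prop :=
  (∀ q ∈ Q, 0 ≤ f q) ∧ (∑ q ∈ Q, f q) = 1

/-- Edge of the reported (diffusion) graph, avoiding a removed set `R` of agents. -/
def edge {A : Type*} (θ : A → Report A) (R : Set A) (a b : A) : Prop :=
  a ∉ R ∧ b ∉ R ∧ b ∈ (θ a).nbrs

/-- `i` participates: it is reachable from the requester (whose neighbours are `rs`)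
avoiding the removed agents `R`.  `participates rs θ {i} k` is membership in I((nil, θ_{-i})). -/
def participates {A : Type*} (rs : Finset A) (θ : A → Report A) (R : Set A) (i : A) : Prop :=
  i ∉ R ∧ ∃ j ∈ rs, j ∉ R ∧ Relation.ReflTransGen (edge θ R) j i

/-- `l` is a simple path from (a neighbour of) the requester to `i` in the reported graph. -/
def pathTo {A : Type*} (rs : Finset A) (θ : A → Report A) (i : A) (l : List A) : Prop :=
  l.Nodup ∧ l.Chain' (edge θ ∅) ∧ (∃ a, l.head? = some a ∧ a ∈ rs) ∧ l.getLast? = some i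

/-- `i` is a critical agent of `j`: `i` lies on every simple path from the requester to `j`. -/
def critical {A : Type*} (rs : Finset A) (θ : A → Report A) (i j : A) : Prop :=
  ∀ l, pathTo rs θ j l → i ∈ l

/-- `v` is the maximum reported welfare among participants when `i` does not
participate (`0` if there are none). -/
def cmax {A : Type*} (Q : Finset ℝ) (rs : Finset A) (θ : A → Report A) (i : A) (v : ℝ) : Prop :=
  0 ≤ v ∧ (∀ k, participates rs θ {i} k → welfare Q (θ k) ≤ v) ∧
    (v = 0 ∨ ∃ k, participates rs θ {i} k ∧ v = welfare Q (θ k))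

/-- An execution of the PEV-based Diffusion Mechanism on report profile `θ`:
`seq 0, …, seq (m-1)` is the critical-agent sequence (i_1, …, i_m) of the
reported-welfare-maximizing agent `j = seq (m-1)`, `w k` the counterfactual maxima,
`t` the index of the selected agent, and `p q i` agent `i`'s payoff when the realized
quality is `q`. -/
structure PEVRun {A : Type*} (Q : Finset ℝ) (rs : Finset A) (θ : A → Report A) where
  m : ℕ
  hm : 0 < m
  seq : ℕ → A
  w : ℕ → ℝ
  t : ℕ
  ht : t < m
  p : ℝ → A → ℝ
  /-- `j = seq (m-1)` maximizes reported expected welfare among participants -/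
  hj : participates rs θ ∅ (seq (m-1)) ∧
    ∀ k, participates rs θ ∅ k → welfare Q (θ k) ≤ welfare Q (θ (seq (m-1)))
  hinj : ∀ k < m, ∀ k' < m, seq k = seq k' → k = k'
  /-- the sequence enumerates exactly the (participating) critical agents of `j` -/
  hcrit : ∀ i, (∃ k < m, seq k = i) ↔
    (critical rs θ i (seq (m-1)) ∧ participates rs θ ∅ i)
  /-- it is ordered by the criticality relation -/
  hord : ∀ k k', k < k' → k' < m → critical rs θ (seq k) (seq k')
  /-- `w k` is the maximum reported welfare among I((nil, θ_{-seq k})) -/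
  hw : ∀ k < m, cmax Q rs θ (seq k) (w k)
  /-- the selected agent is the first in the sequence whose reported welfare equals
  the next counterfactual maximum (and `j` if there is none) -/
  hsel : (t + 1 < m → welfare Q (θ (seq t)) = w (t + 1)) ∧
    ∀ k < t, welfare Q (θ (seq k)) ≠ w (k + 1)
  hpay1 : ∀ q, ∀ k < t, p q (seq k) = w (k + 1) - w k
  hpay2 : ∀ q, p q (seq t) = q - w t
  hpay3 : ∀ q, ∀ k, t < k → k < m → p q (seq k) = 0
  hpay4 : ∀ q i, (∀ k < m, seq k ≠ i) → p q i = 0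

section PEVAux

variable {A : Type*} {Q : Finset ℝ} {rs : Finset A} {θ θ' : A → Report A} {i : A}

lemma edge_mono {R : Set A} {a b : A} (h : edge θ R a b) : edge θ ∅ a b :=
  ⟨by simp, by simp, h.2.2⟩

lemma chain'_dedup_aux {r : A → A → Prop} :
    ∀ (n : ℕ) (l : List A), l.length ≤ n → l.Chain' r →
    ∃ l' : List A, l'.Nodup ∧ l'.Chain' r ∧ l'.head? = l.head? ∧ l'.getLast? = l.getLast? ∧
      ∀ a ∈ l', a ∈ l := by
  intro n
  induction n with
  | zero =>
    intro l hlen _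
    have : l = [] := List.eq_nil_of_length_eq_zero (Nat.le_zero.1 hlen)
    subst this; exact ⟨[], by simp [List.Chain']⟩
  | succ n ih =>
    intro l hlen hl
    match l, hl with
    | [], _ => exact ⟨[], by simp [List.Chain']⟩
    | b :: rest, hl =>
      by_cases hb : b ∈ rest
      · obtain ⟨s, u, rfl⟩ := List.append_of_mem hb
        have hsuf : (b :: u) <:+ (b :: (s ++ b :: u)) := ⟨b :: s, by simp⟩
        have hlen2 : (b :: u).length ≤ n := by simp at hlen ⊢; omega
        obtain ⟨l', h1, h2, h3, h4, h5⟩ := ih (b :: u) hlen2 (hl.suffix hsuf)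
        refine ⟨l', h1, h2, by simpa using h3, ?_, fun a ha => hsuf.subset (h5 a ha)⟩
        rw [h4]
        show (b :: u).getLast? = ((b :: s) ++ (b :: u)).getLast?
        cases hgl : (b :: u).getLast? with
        | none => simp [List.getLast?_eq_none_iff] at hgl
        | some y => rw [List.getLast?_append, hgl]; rfl
      · match rest with
        | [] => exact ⟨[b], by simp [List.Chain']⟩
        | c :: rest0 =>
          obtain ⟨l', h1, h2, h3, h4, h5⟩ := ih (c :: rest0) (by simp at hlen ⊢; omega) hl.tail
          have hne : l' ≠ [] := by
            intro h; rw [h] at h3; simp at h3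
          refine ⟨b :: l', ?_, ?_, by simp, ?_, ?_⟩
          · exact List.nodup_cons.2 ⟨fun h => hb (h5 b h), h1⟩
          · refine List.isChain_cons.2 ⟨fun y hy => ?_, h2⟩
            rw [h3] at hy
            simp at hy
            subst hy
            exact (List.isChain_cons_cons.1 hl).1
          · show ((b :: l').getLast? = ((b :: (c :: rest0)).getLast?))
            rw [show b :: l' = [b] ++ l' from rfl, List.getLast?_append,
              show b :: c :: rest0 = [b] ++ (c :: rest0) from rfl, List.getLast?_append, h4]
          · intro a ha
            rcases List.mem_cons.1 ha with h | h
            · simp [h]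
            · exact List.mem_cons_of_mem _ (h5 a h)

lemma chain'_dedup {r : A → A → Prop} (l : List A) (hl : l.Chain' r) :
    ∃ l' : List A, l'.Nodup ∧ l'.Chain' r ∧ l'.head? = l.head? ∧ l'.getLast? = l.getLast? ∧
      ∀ a ∈ l', a ∈ l :=
  chain'_dedup_aux l.length l le_rfl hl

lemma exists_walk {R : Set A} {j x : A} (h : Relation.ReflTransGen (edge θ R) j x) (hj : j ∉ R) :
    ∃ l : List A, l.Chain' (edge θ ∅) ∧ l.head? = some j ∧ l.getLast? = some x ∧
      ∀ a ∈ l, a ∉ R := by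
  induction h with
  | refl => exact ⟨[j], by simp [List.Chain'], rfl, rfl, by simpa⟩
  | @tail b c hbc hstep ih =>
    obtain ⟨l, h1, h2, h3, h4⟩ := ih
    have hlne : l ≠ [] := by intro h; rw [h] at h2; simp at h2
    refine ⟨l ++ [c], List.isChain_append.2 ⟨h1, by simp, ?_⟩, ?_, by simp, ?_⟩
    · intro y hy z hz
      simp at hz; subst hz
      rw [h3] at hy; simp at hy; subst hy
      exact edge_mono hstep
    · rw [List.head?_append, h2]; rfl
    · intro a ha
      rcases List.mem_append.1 ha with h | h
      · exact h4 a h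
      · simp at h; subst h; exact hstep.2.1

lemma participates_path {R : Set A} {x : A} (h : participates rs θ R x) :
    ∃ l, pathTo rs θ x l ∧ ∀ a ∈ l, a ∉ R := by
  obtain ⟨hx, j, hjrs, hjR, hreach⟩ := h
  obtain ⟨l, hc, hh, hlast, hR⟩ := exists_walk hreach hjR
  obtain ⟨l', hnd, hc', hh', hl', hmem⟩ := chain'_dedup l hc
  exact ⟨l', ⟨hnd, hc', ⟨j, by rw [hh', hh], hjrs⟩, by rw [hl', hlast]⟩,
    fun a ha => hR a (hmem a ha)⟩

lemma chain_reach {R : Set A} :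
    ∀ (l : List A) (a x : A), l.Chain' (edge θ ∅) → (∀ b ∈ l, b ∉ R) →
      l.head? = some a → l.getLast? = some x → Relation.ReflTransGen (edge θ R) a x := by
  intro l
  induction l with
  | nil => intro a x _ _ h; simp at h
  | cons b rest ih =>
    intro a x hc hR hh hlast
    have hba : b = a := by simpa using hh
    subst hba
    match rest with
    | [] =>
      have : b = x := by simpa using hlast
      subst this; exact Relation.ReflTransGen.refl
    | c :: rest0 =>
      have hedge : edge θ R b c := by
        have h1 := (List.isChain_cons_cons.1 hc).1
        exact ⟨hR b (by simp), hR c (by simp), h1.2.2⟩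
      exact Relation.ReflTransGen.head hedge
        (ih c x (List.isChain_cons_cons.1 hc).2 (fun b hb => hR b (List.mem_cons_of_mem _ hb)) rfl
          (by simpa using hlast))

lemma pathTo_participates {R : Set A} {x : A} {l : List A} (hl : pathTo rs θ x l)
    (hR : ∀ a ∈ l, a ∉ R) : participates rs θ R x := by
  obtain ⟨hnd, hc, ⟨a, hha, hars⟩, hlast⟩ := hl
  exact ⟨hR x (List.mem_of_mem_getLast? (by simp [hlast])), a, hars,
    hR a (List.mem_of_mem_head? (by simp [hha])), chain_reach l a x hc hR hha hlast⟩

lemma pathTo_prefix {x a : A} {l : List A} (hl : pathTo rs θ x l) (ha : a ∈ l) :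
    ∃ s t, l = s ++ a :: t ∧ pathTo rs θ a (s ++ [a]) := by
  obtain ⟨s, t, rfl⟩ := List.append_of_mem ha
  have hpre : (s ++ [a]) <+: (s ++ a :: t) := ⟨t, by simp⟩
  refine ⟨s, t, rfl, hl.1.sublist hpre.sublist, hl.2.1.prefix hpre, ?_, List.getLast?_concat⟩
  obtain ⟨a₀, hh, hrs⟩ := hl.2.2.1
  refine ⟨a₀, ?_, hrs⟩
  rw [List.head?_append] at hh ⊢
  match s with
  | [] => simpa using hh
  | b :: s0 => simpa using hh

lemma critical_self (a : A) : critical rs θ a a := fun _ hl =>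
  List.mem_of_mem_getLast? (by simp [hl.2.2.2])

lemma crit_antisymm {a b : A} (hab : critical rs θ a b) (hba : critical rs θ b a)
    (hb : participates rs θ ∅ b) : a = b := by
  by_contra hne
  obtain ⟨l, hl, -⟩ := participates_path hb
  obtain ⟨s, t, rfl, hp⟩ := pathTo_prefix hl (hab l hl)
  have hbmem : b ∈ s ++ [a] := hba _ hp
  have hbs : b ∈ s := by
    rcases List.mem_append.1 hbmem with h | h
    · exact h
    · simp at h; exact absurd h.symm hne
  have hlast := hl.2.2.2
  match t with
  | [] =>
    rw [List.getLast?_concat] at hlast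
    simp at hlast
    exact hne hlast
  | c :: t0 =>
    have : b ∈ a :: c :: t0 := by
      have : (s ++ a :: c :: t0).getLast? = (a :: c :: t0).getLast? := by
        rw [List.getLast?_append]
        cases hgl : (a :: c :: t0).getLast? with
        | none => simp [List.getLast?_eq_none_iff] at hgl
        | some y => rfl
      rw [this] at hlast
      exact List.mem_of_mem_getLast? (by simp [hlast])
    exact (List.disjoint_of_nodup_append hl.1) hbs this

lemma crit_participates {a b : A} (hab : critical rs θ a b) (hne : a ≠ b)
    (ha : participates rs θ ∅ a) : participates rs θ {b} a := by
  obtain ⟨l, hl, -⟩ := participates_path ha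
  have hbl : b ∉ l := by
    intro hbl
    obtain ⟨s, t, rfl, hp⟩ := pathTo_prefix hl hbl
    have hamem : a ∈ s ++ [b] := hab _ hp
    have has : a ∈ s := by
      rcases List.mem_append.1 hamem with h | h
      · exact h
      · simp at h; exact absurd h hne
    have hlast := hl.2.2.2
    match t with
    | [] =>
      rw [List.getLast?_concat] at hlast
      simp at hlast
      exact hne (hlast ▸ rfl)
    | c :: t0 =>
      have : a ∈ b :: c :: t0 := by
        have heq : (s ++ b :: c :: t0).getLast? = (b :: c :: t0).getLast? := by
          rw [List.getLast?_append]
          cases hgl : (b :: c :: t0).getLast? with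
          | none => simp [List.getLast?_eq_none_iff] at hgl
          | some y => rfl
        rw [heq] at hlast
        exact List.mem_of_mem_getLast? (by simp [hlast])
      exact (List.disjoint_of_nodup_append hl.1) has this
  exact pathTo_participates hl (by intro c hc; simp; rintro rfl; exact hbl hc)

lemma not_crit_participates {a b : A} (h : ¬ critical rs θ b a)
    (ha : participates rs θ ∅ a) : participates rs θ {b} a := by
  unfold critical at h
  push_neg at h
  obtain ⟨l, hl, hbl⟩ := h
  exact pathTo_participates hl (by intro c hc; simp; rintro rfl; exact hbl hc)

lemma participates_mono {R : Set A} {x : A} (h : participates rs θ R x) :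
    participates rs θ ∅ x := by
  obtain ⟨hx, j, hjrs, hjR, hreach⟩ := h
  exact ⟨by simp, j, hjrs, by simp, Relation.ReflTransGen.mono (fun a b hab => edge_mono hab) _ _ hreach⟩

lemma not_particip_of_crit {a b : A} (hcr : critical rs θ a b) :
    ¬ participates rs θ {a} b := by
  intro h
  obtain ⟨l, hl, hR⟩ := participates_path h
  exact hR a (hcr l hl) rfl

lemma participates_trans_crit {a b x : A} (hcrit : critical rs θ a b)
    (h : participates rs θ {a} x) : participates rs θ {b} x := by
  obtain ⟨l, hl, hR⟩ := participates_path h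
  have hbl : b ∉ l := by
    intro hbl
    obtain ⟨s, t, rfl, hp⟩ := pathTo_prefix hl hbl
    have : a ∈ s ++ [b] := hcrit _ hp
    have ha2 : a ∈ s ++ b :: t := by
      rcases List.mem_append.1 this with h' | h'
      · exact List.mem_append.2 (Or.inl h')
      · simp at h'; subst h'; exact List.mem_append.2 (Or.inr (by simp))
    exact hR a ha2 rfl
  exact pathTo_participates hl (by intro c hc; simp; rintro rfl; exact hbl hc)

lemma crit_trans {a b c : A} (h1 : critical rs θ a b) (h2 : critical rs θ b c) :
    critical rs θ a c := by
  intro l hl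
  obtain ⟨s, t, rfl, hp⟩ := pathTo_prefix hl (h2 l hl)
  have := h1 _ hp
  rcases List.mem_append.1 this with h | h
  · exact List.mem_append.2 (Or.inl h)
  · simp at h; subst h; exact List.mem_append.2 (Or.inr (by simp))

section Transfer

variable (hothers : ∀ a, a ≠ i → θ a = θ' a) (hnbrs : (θ i).nbrs = (θ' i).nbrs)

include hothers hnbrs

lemma nbrs_eq : ∀ a, (θ a).nbrs = (θ' a).nbrs := by
  intro a
  by_cases ha : a = i
  · subst ha; exact hnbrs
  · rw [hothers a ha]

lemma edge_eq : edge θ = edge θ' := by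
  funext R a b
  unfold edge
  rw [nbrs_eq hothers hnbrs a]

lemma participates_iff {R : Set A} {x : A} :
    participates rs θ R x ↔ participates rs θ' R x := by
  unfold participates
  rw [edge_eq hothers hnbrs]

lemma critical_iff {a b : A} : critical rs θ a b ↔ critical rs θ' a b := by
  unfold critical pathTo
  rw [edge_eq hothers hnbrs]

omit hnbrs in
lemma welfare_eq {a : A} (ha : a ≠ i) : welfare Q (θ a) = welfare Q (θ' a) := by
  rw [hothers a ha]

lemma cmax_transfer {x : A} {v v' : ℝ} (h : cmax Q rs θ x v) (h' : cmax Q rs θ' x v')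
    (hv : ∀ k, participates rs θ {x} k → welfare Q (θ k) = v → k ≠ i)
    (hv' : ∀ k, participates rs θ' {x} k → welfare Q (θ' k) = v' → k ≠ i) :
    v = v' := by
  apply le_antisymm
  · rcases h.2.2 with h0 | ⟨k, hk, hkv⟩
    · exact h0 ▸ h'.1
    · have hki : k ≠ i := hv k hk hkv.symm
      rw [hkv, welfare_eq hothers hki]
      exact h'.2.1 k ((participates_iff hothers hnbrs).1 hk)
  · rcases h'.2.2 with h0 | ⟨k, hk, hkv⟩
    · exact h0 ▸ h.1
    · have hki : k ≠ i := hv' k hk hkv.symm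
      rw [hkv, ← welfare_eq hothers hki]
      exact h.2.1 k ((participates_iff hothers hnbrs).2 hk)

end Transfer

section RunLemmas

variable (E : PEVRun Q rs θ)

lemma run_particip {k : ℕ} (hk : k < E.m) : participates rs θ ∅ (E.seq k) :=
  ((E.hcrit (E.seq k)).1 ⟨k, hk, rfl⟩).2

lemma run_crit {k : ℕ} (hk : k < E.m) : critical rs θ (E.seq k) (E.seq (E.m - 1)) :=
  ((E.hcrit (E.seq k)).1 ⟨k, hk, rfl⟩).1

lemma run_ne {k k' : ℕ} (hk : k < E.m) (hk' : k' < E.m) (hne : k ≠ k') :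
    E.seq k ≠ E.seq k' := fun h => hne (E.hinj k hk k' hk' h)

lemma run_particip_next {k : ℕ} (hk1 : k + 1 < E.m) :
    participates rs θ {E.seq (k+1)} (E.seq k) :=
  crit_participates (E.hord k (k+1) (Nat.lt_succ_self k) hk1)
    (run_ne E (Nat.lt_of_succ_lt hk1) hk1 (by omega))
    (run_particip E (Nat.lt_of_succ_lt hk1))

lemma run_w_mono {k : ℕ} (hk1 : k + 1 < E.m) : E.w k ≤ E.w (k+1) := by
  have hk : k < E.m := Nat.lt_of_succ_lt hk1
  rcases (E.hw k hk).2.2 with h0 | ⟨l, hl, hlv⟩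
  · exact h0 ▸ (E.hw (k+1) hk1).1
  · rw [hlv]
    exact (E.hw (k+1) hk1).2.1 l
      (participates_trans_crit (E.hord k (k+1) (Nat.lt_succ_self k) hk1) hl)

lemma run_welfare_le {l : A} (hl : participates rs θ ∅ l) :
    welfare Q (θ l) ≤ welfare Q (θ (E.seq (E.m - 1))) := E.hj.2 l hl

end RunLemmas

section TwoRuns

variable (hothers : ∀ a, a ≠ i → θ a = θ' a) (hnbrs : (θ i).nbrs = (θ' i).nbrs)
variable (E : PEVRun Q rs θ) (E' : PEVRun Q rs θ')

include hothers hnbrs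

lemma seq_agree {k k' : ℕ} (hk : k < E.m) (hk' : k' < E'.m)
    (hik : E.seq k = i) (hik' : E'.seq k' = i) :
    ∀ l, l ≤ k → l ≤ k' → E'.seq l = E.seq l := by
  intro l
  induction l using Nat.strong_induction_on with
  | _ l IH =>
    intro hlk hlk'
    have hlm : l < E.m := lt_of_le_of_lt hlk hk
    have hlm' : l < E'.m := lt_of_le_of_lt hlk' hk'
    set y := E'.seq l with hy
    set z := E.seq l with hz
    -- y is critical for i (in θ')
    have hycrit' : critical rs θ' y i := by
      rcases lt_or_eq_of_le hlk' with h | h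
      · exact hik' ▸ E'.hord l k' h hk'
      · rw [hy, h, hik']; exact critical_self i
    have hycrit : critical rs θ y i := (critical_iff hothers hnbrs).2 hycrit'
    have hicritj : critical rs θ i (E.seq (E.m - 1)) := hik ▸ run_crit E hk
    have hyj : critical rs θ y (E.seq (E.m - 1)) := crit_trans hycrit hicritj
    have hypart : participates rs θ ∅ y :=
      (participates_iff hothers hnbrs).2 (run_particip E' hlm')
    obtain ⟨p, hp, hpy⟩ := (E.hcrit y).2 ⟨hyj, hypart⟩
    -- z is critical for i (in θ)
    have hzcrit : critical rs θ z i := by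
      rcases lt_or_eq_of_le hlk with h | h
      · exact hik ▸ E.hord l k h hk
      · rw [hz, h, hik]; exact critical_self i
    have hzcrit' : critical rs θ' z i := (critical_iff hothers hnbrs).1 hzcrit
    have hicritj' : critical rs θ' i (E'.seq (E'.m - 1)) := hik' ▸ run_crit E' hk'
    have hzj' : critical rs θ' z (E'.seq (E'.m - 1)) := crit_trans hzcrit' hicritj'
    have hzpart' : participates rs θ' ∅ z :=
      (participates_iff hothers hnbrs).1 (run_particip E hlm)
    obtain ⟨p', hp', hpz⟩ := (E'.hcrit z).2 ⟨hzj', hzpart'⟩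
    rcases lt_trichotomy p l with hpl | hpl | hpl
    · exfalso
      have := IH p hpl (le_of_lt (lt_of_lt_of_le hpl hlk)) (le_of_lt (lt_of_lt_of_le hpl hlk'))
      rw [hpy] at this
      have hpm' : p < E'.m := (lt_of_lt_of_le hpl hlk').trans hk'
      exact absurd (E'.hinj p hpm' l hlm' (by rw [this])) (by omega)
    · rw [hz, ← hpl, hpy]
    · rcases lt_trichotomy p' l with hpl' | hpl' | hpl'
      · exfalso
        have := IH p' hpl' (le_of_lt (lt_of_lt_of_le hpl' hlk)) (le_of_lt (lt_of_lt_of_le hpl' hlk'))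
        rw [hpz] at this
        have hpm : p' < E.m := (lt_of_lt_of_le hpl' hlk).trans hk
        exact absurd (E.hinj p' hpm l hlm (by rw [← this])) (by omega)
      · rw [hy, ← hpl']; exact hpz
      · have h1 : critical rs θ z y := hpy ▸ E.hord l p hpl hp
        have h2 : critical rs θ' y z := hpz ▸ E'.hord l p' hpl' hp'
        have h2' : critical rs θ y z := (critical_iff hothers hnbrs).2 h2
        exact crit_antisymm h2' h1 (run_particip E hlm)

lemma pos_eq {k k' : ℕ} (hk : k < E.m) (hk' : k' < E'.m)
    (hik : E.seq k = i) (hik' : E'.seq k' = i) : k' = k := by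
  rcases le_total k k' with h | h
  · have := seq_agree hothers hnbrs E E' hk hk' hik hik' k le_rfl h
    rw [hik] at this
    exact E'.hinj k' hk' k (lt_of_le_of_lt h hk') (by rw [hik', this])
  · have := seq_agree hothers hnbrs E E' hk hk' hik hik' k' h le_rfl
    rw [hik'] at this
    exact E.hinj k' (lt_of_le_of_lt h hk) k hk (by rw [← this, hik])

end TwoRuns

section KeyLemmas

variable (hothers : ∀ a, a ≠ i → θ a = θ' a) (hnbrs : (θ i).nbrs = (θ' i).nbrs)
variable (E : PEVRun Q rs θ) (E' : PEVRun Q rs θ')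

include hothers hnbrs

/-- If `i` is not in the critical sequence of the other run, and is unselected here,
its payoff is zero. -/
lemma payoff_zero (hnot' : ∀ k, k < E'.m → E'.seq k ≠ i) (hns : E.seq E.t ≠ i) (q : ℝ) :
    E.p q i = 0 := by
  by_cases hin : ∃ k, k < E.m ∧ E.seq k = i
  · obtain ⟨k, hk, hik⟩ := hin
    rcases lt_trichotomy k E.t with hkt | hkt | hkt
    · -- k < t : show w (k+1) = w k
      rw [← hik, E.hpay1 q k hkt]
      have hk1 : k + 1 < E.m := Nat.lt_of_le_of_lt hkt E.ht
      have hj'm : E'.m - 1 < E'.m := by have := E'.hm; omega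
      set j' := E'.seq (E'.m - 1) with hj'
      have hij' : ¬ critical rs θ' i j' := by
        intro hc
        have hpart' : participates rs θ' ∅ i :=
          (participates_iff hothers hnbrs).1 (hik ▸ run_particip E hk)
        obtain ⟨p, hp, hpi⟩ := (E'.hcrit i).2 ⟨hc, hpart'⟩
        exact hnot' p hp hpi
      have hj'i2 : j' ≠ i := fun h => hij' (by rw [h]; exact critical_self i)
      have hij'θ : ¬ critical rs θ i j' := fun h => hij' ((critical_iff hothers hnbrs).1 h)
      have hj'pθ : participates rs θ ∅ j' :=
        (participates_iff hothers hnbrs).2 (run_particip E' hj'm)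
      have hj'mi : participates rs θ {i} j' := not_crit_participates hij'θ hj'pθ
      have hwk : cmax Q rs θ i (E.w k) := hik ▸ E.hw k hk
      have h1 : welfare Q (θ j') ≤ E.w k := hwk.2.1 j' hj'mi
      have hub : E.w (k+1) ≤ E.w k := by
        rcases (E.hw (k+1) hk1).2.2 with h0 | ⟨l, hl, hlv⟩
        · rw [h0]; exact hwk.1
        · have hli : l ≠ i := by
            intro h; subst h
            exact (E.hsel.2 k hkt) (by rw [hik, ← hlv])
          have hlpart : participates rs θ ∅ l := participates_mono hl
          have h2 : welfare Q (θ l) ≤ welfare Q (θ (E.seq (E.m-1))) := run_welfare_le E hlpart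
          have hji : E.seq (E.m - 1) ≠ i := by
            intro h
            have hm1 : E.m - 1 < E.m := by have := E.hm; omega
            have : k = E.m - 1 := E.hinj k hk (E.m - 1) hm1 (by rw [hik, h])
            have := E.ht; omega
          have h3 : welfare Q (θ (E.seq (E.m-1))) = welfare Q (θ' (E.seq (E.m-1))) :=
            welfare_eq hothers hji
          have h4 : welfare Q (θ' (E.seq (E.m-1))) ≤ welfare Q (θ' j') :=
            run_welfare_le E' ((participates_iff hothers hnbrs).1
              (run_particip E (by have := E.hm; omega)))
          have h5 : welfare Q (θ' j') = welfare Q (θ j') := (welfare_eq hothers hj'i2).symm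
          calc E.w (k+1) = welfare Q (θ l) := hlv
            _ ≤ welfare Q (θ (E.seq (E.m-1))) := h2
            _ = welfare Q (θ' (E.seq (E.m-1))) := h3
            _ ≤ welfare Q (θ' j') := h4
            _ = welfare Q (θ j') := h5
            _ ≤ E.w k := h1
      have hlb := run_w_mono E hk1
      have : E.w (k+1) = E.w k := le_antisymm hub hlb
      rw [this, sub_self]
    · exact absurd (hkt ▸ hik) hns
    · rw [← hik]; exact E.hpay3 q k hkt hk
  · push_neg at hin
    exact E.hpay4 q i (fun k hk => hin k hk)

/-- Selected at `t < k` in one run but at `t' > k` in the other is impossible. -/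
lemma cross_impossible {k : ℕ} (hk : k < E.m) (hk' : k < E'.m)
    (hik : E.seq k = i) (hik' : E'.seq k = i)
    (hagree : ∀ l, l ≤ k → E'.seq l = E.seq l)
    (htk : E.t < k) (hkt' : k < E'.t) : False := by
  have ht1 : E.t + 1 < E.m := by omega
  have heq := E.hsel.1 ht1
  have hx := hagree (E.t + 1) (by omega)
  -- transfer w (t+1)
  set x := E.seq (E.t + 1) with hxdef
  have hnpi : ¬ participates rs θ {x} i := by
    rcases eq_or_lt_of_le (show E.t + 1 ≤ k by omega) with h | h
    · rw [hxdef, h, hik]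
      intro hp
      exact hp.1 rfl
    · exact not_particip_of_crit (hik ▸ E.hord (E.t+1) k h hk)
  have hnpi' : ¬ participates rs θ' {x} i :=
    fun hp => hnpi ((participates_iff hothers hnbrs).2 hp)
  have hcm : cmax Q rs θ x (E.w (E.t + 1)) := E.hw (E.t+1) ht1
  have hcm' : cmax Q rs θ' x (E'.w (E.t + 1)) := hx ▸ E'.hw (E.t+1) (by omega)
  have hweq : E.w (E.t+1) = E'.w (E.t+1) :=
    cmax_transfer hothers hnbrs hcm hcm'
      (fun l hl _ hli => hnpi (hli ▸ hl))
      (fun l hl _ hli => hnpi' (hli ▸ hl))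
  have hts : E'.seq E.t = E.seq E.t := hagree E.t (by omega)
  have htne : E.seq E.t ≠ i := by
    intro h
    exact absurd (E.hinj E.t (by omega) k hk (by rw [h, hik])) (by omega)
  have : welfare Q (θ' (E'.seq E.t)) = E'.w (E.t + 1) := by
    rw [hts, ← welfare_eq hothers htne, heq, hweq]
  exact E'.hsel.2 E.t (by omega) this

end KeyLemmas

section Matched

variable (hothers : ∀ a, a ≠ i → θ a = θ' a) (hnbrs : (θ i).nbrs = (θ' i).nbrs)
variable (E : PEVRun Q rs θ) (E' : PEVRun Q rs θ')

include hothers hnbrs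

lemma w_next_eq {k : ℕ} (hik : E.seq k = i) (hik' : E'.seq k = i)
    (hkt : k < E.t) (hkt' : k < E'.t)
    (hagree : ∀ l, l ≤ k → E'.seq l = E.seq l) :
    E.w (k+1) = E'.w (k+1) := by
  have hk1 : k + 1 < E.m := Nat.lt_of_le_of_lt hkt E.ht
  have hk1' : k + 1 < E'.m := Nat.lt_of_le_of_lt hkt' E'.ht
  have hk : k < E.m := by omega
  have hk' : k < E'.m := by omega
  set x := E.seq (k+1) with hxdef
  set x' := E'.seq (k+1) with hx'def
  -- strictness from selection rule
  have hsx : welfare Q (θ i) ≠ E.w (k+1) := hik ▸ E.hsel.2 k hkt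
  have hsx' : welfare Q (θ' i) ≠ E'.w (k+1) := hik' ▸ E'.hsel.2 k hkt'
  have hcm : cmax Q rs θ x (E.w (k+1)) := E.hw (k+1) hk1
  have hcm' : cmax Q rs θ' x' (E'.w (k+1)) := E'.hw (k+1) hk1'
  by_cases hxx : x = x'
  · refine cmax_transfer hothers hnbrs hcm (hxx ▸ hcm') ?_ ?_
    · intro l hl hlv hli
      exact hsx (by rw [← hli, hlv])
    · intro l hl hlv hli
      exact hsx' (by rw [← hli, hlv])
  · -- the two next critical agents differ
    have hm1 : E.m - 1 < E.m := by have := E.hm; omega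
    have hm1' : E'.m - 1 < E'.m := by have := E'.hm; omega
    set j := E.seq (E.m - 1) with hjdef
    set j' := E'.seq (E'.m - 1) with hj'def
    have hji : j ≠ i := by
      intro h
      have := E.hinj k hk (E.m - 1) hm1 (by rw [hik, ← h, hjdef])
      have := E.ht; omega
    have hj'i : j' ≠ i := by
      intro h
      have := E'.hinj k hk' (E'.m - 1) hm1' (by rw [hik', ← h, hj'def])
      have := E'.ht; omega
    -- welfare of the two maximizers agree
    have hMeq : welfare Q (θ' j') = welfare Q (θ j) := by
      have a1 : welfare Q (θ j) = welfare Q (θ' j) := welfare_eq hothers hji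
      have a2 : welfare Q (θ' j) ≤ welfare Q (θ' j') :=
        run_welfare_le E' ((participates_iff hothers hnbrs).1 (run_particip E hm1))
      have a3 : welfare Q (θ' j') = welfare Q (θ j') := (welfare_eq hothers hj'i).symm
      have a4 : welfare Q (θ j') ≤ welfare Q (θ j) :=
        run_welfare_le E ((participates_iff hothers hnbrs).2 (run_particip E' hm1'))
      linarith
    have hMeq2 : welfare Q (θ j') = welfare Q (θ j) := by
      rw [welfare_eq hothers hj'i]
      exact hMeq
    -- auxiliary implications
    have lemA : critical rs θ x j' → critical rs θ x' x := by
      intro hc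
      have hcθ' : critical rs θ' x j' := (critical_iff hothers hnbrs).1 hc
      have hpartθ' : participates rs θ' ∅ x :=
        (participates_iff hothers hnbrs).1 (run_particip E hk1)
      obtain ⟨p, hp, hpx⟩ := (E'.hcrit x).2 ⟨hcθ', hpartθ'⟩
      rcases lt_trichotomy p (k+1) with hpk | hpk | hpk
      · exfalso
        have hple : p ≤ k := by omega
        have : E.seq p = x := by rw [← hagree p hple, hpx]
        have := E.hinj p (by omega) (k+1) hk1 this
        omega
      · exact absurd (by rw [← hpx, hpk]) hxx
      · exact (critical_iff hothers hnbrs).2 (hpx ▸ E'.hord (k+1) p hpk hp)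
    have lemB : critical rs θ x' j → critical rs θ x x' := by
      intro hc
      have hpart : participates rs θ ∅ x' :=
        (participates_iff hothers hnbrs).2 (run_particip E' hk1')
      obtain ⟨p, hp, hpx⟩ := (E.hcrit x').2 ⟨hc, hpart⟩
      rcases lt_trichotomy p (k+1) with hpk | hpk | hpk
      · exfalso
        have hple : p ≤ k := by omega
        have : E'.seq p = x' := by rw [hagree p hple, hpx]
        have := E'.hinj p (by omega) (k+1) hk1' this
        omega
      · exact absurd (by rw [← hpx, hpk]) (Ne.symm hxx)
      · exact hpx ▸ E.hord (k+1) p hpk hp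
    have hnotboth : ¬ (critical rs θ x j' ∧ critical rs θ x' j) := by
      rintro ⟨hc1, hc2⟩
      exact hxx (crit_antisymm (lemB hc2) (lemA hc1)
        ((participates_iff hothers hnbrs).2 (run_particip E' hk1')))
    -- lower bound for E.w (k+1)
    have lbE : welfare Q (θ j) ≤ E.w (k+1) := by
      by_cases hc : critical rs θ x j'
      · have hcx'j : ¬ critical rs θ x' j := fun h => hnotboth ⟨hc, h⟩
        have hx'x : critical rs θ x' x := lemA hc
        have hjpart : participates rs θ {x'} j :=
          not_crit_participates hcx'j (run_particip E hm1)
        exact hcm.2.1 j (participates_trans_crit hx'x hjpart)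
      · have hj'part : participates rs θ {x} j' :=
          not_crit_participates hc
            ((participates_iff hothers hnbrs).2 (run_particip E' hm1'))
        calc welfare Q (θ j) = welfare Q (θ j') := hMeq2.symm
          _ ≤ E.w (k+1) := hcm.2.1 j' hj'part
    -- lower bound for E'.w (k+1)
    have lbE' : welfare Q (θ j) ≤ E'.w (k+1) := by
      by_cases hc : critical rs θ x' j
      · have hcxj' : ¬ critical rs θ x j' := fun h => hnotboth ⟨h, hc⟩
        have hxx' : critical rs θ x x' := lemB hc
        have hxx'θ' : critical rs θ' x x' := (critical_iff hothers hnbrs).1 hxx'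
        have hj'part : participates rs θ' {x} j' := by
          apply not_crit_participates (fun h => hcxj' ((critical_iff hothers hnbrs).2 h))
            (run_particip E' hm1')
        calc welfare Q (θ j) = welfare Q (θ' j') := hMeq.symm
          _ ≤ E'.w (k+1) := hcm'.2.1 j' (participates_trans_crit hxx'θ' hj'part)
      · have hjpart : participates rs θ' {x'} j := by
          apply not_crit_participates (fun h => hc ((critical_iff hothers hnbrs).2 h))
            ((participates_iff hothers hnbrs).1 (run_particip E hm1))
        calc welfare Q (θ j) = welfare Q (θ' j) := welfare_eq hothers hji
          _ ≤ E'.w (k+1) := hcm'.2.1 j hjpart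
    -- upper bounds
    apply le_antisymm
    · rcases hcm.2.2 with h0 | ⟨l, hl, hlv⟩
      · rw [h0]; exact hcm'.1
      · have hli : l ≠ i := fun h => hsx (by rw [← h, ← hlv])
        calc E.w (k+1) = welfare Q (θ l) := hlv
          _ ≤ welfare Q (θ j) := run_welfare_le E (participates_mono hl)
          _ ≤ E'.w (k+1) := lbE'
    · rcases hcm'.2.2 with h0 | ⟨l, hl, hlv⟩
      · rw [h0]; exact hcm.1
      · have hli : l ≠ i := fun h => hsx' (by rw [← h, ← hlv])
        calc E'.w (k+1) = welfare Q (θ' l) := hlv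
          _ = welfare Q (θ l) := (welfare_eq hothers hli).symm
          _ ≤ welfare Q (θ j) := run_welfare_le E
              ((participates_iff hothers hnbrs).2 (participates_mono hl))
          _ ≤ E.w (k+1) := lbE

end Matched

end PEVAux
/-- In the PEV-based Diffusion Mechanism, an agent's payoff is independent of her own
reported distribution and cost: if two report profiles differ only in agent `i`'s
reported `f` and `c` (same neighbour set and same reports of the others), and `i` is
selected in both or unselected in both, then for every realized quality `i`'s payoff
is the same under both profiles. -/
theorem stmt_3 {A : Type*} (Q : Finset ℝ) (rs : Finset A) (θ θ' : A → Report A) (i : A)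
    (hothers : ∀ a, a ≠ i → θ a = θ' a) (hnbrs : (θ i).nbrs = (θ' i).nbrs)
    (R : PEVRun Q rs θ) (R' : PEVRun Q rs θ')
    (hstatus : (R.seq R.t = i ∧ R'.seq R'.t = i) ∨ (R.seq R.t ≠ i ∧ R'.seq R'.t ≠ i)) :
    ∀ q ∈ Q, R.p q i = R'.p q i := by
  intro q _
  have hothers' : ∀ a, a ≠ i → θ' a = θ a := fun a ha => (hothers a ha).symm
  have hnbrs' : (θ' i).nbrs = (θ i).nbrs := hnbrs.symm
  rcases hstatus with ⟨h1, h2⟩ | ⟨h1, h2⟩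
  · -- selected in both runs
    have hwt : cmax Q rs θ i (R.w R.t) := h1 ▸ R.hw R.t R.ht
    have hwt' : cmax Q rs θ' i (R'.w R'.t) := h2 ▸ R'.hw R'.t R'.ht
    have hww : R.w R.t = R'.w R'.t :=
      cmax_transfer hothers hnbrs hwt hwt'
        (fun l hl _ hli => hl.1 (by rw [hli]; rfl))
        (fun l hl _ hli => hl.1 (by rw [hli]; rfl))
    have L1 : R.p q i = q - R.w R.t := by rw [← h1, R.hpay2 q]
    have L2 : R'.p q i = q - R'.w R'.t := by rw [← h2, R'.hpay2 q]
    rw [L1, L2, hww]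
  · -- unselected in both runs
    by_cases hin : ∃ k, k < R.m ∧ R.seq k = i
    · by_cases hin' : ∃ k', k' < R'.m ∧ R'.seq k' = i
      · obtain ⟨k, hk, hik⟩ := hin
        obtain ⟨k', hk', hik'⟩ := hin'
        have hkk : k' = k := pos_eq hothers hnbrs R R' hk hk' hik hik'
        subst hkk
        have hagree : ∀ l, l ≤ k' → R'.seq l = R.seq l :=
          fun l hl => seq_agree hothers hnbrs R R' hk hk' hik hik' l hl hl
        rcases lt_trichotomy k' R.t with hkt | hkt | hkt
        · rcases lt_trichotomy k' R'.t with hkt' | hkt' | hkt'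
          · -- k < t and k < t'
            have hwk : cmax Q rs θ i (R.w k') := hik ▸ R.hw k' hk
            have hwk' : cmax Q rs θ' i (R'.w k') := hik' ▸ R'.hw k' hk'
            have e1 : R.w k' = R'.w k' :=
              cmax_transfer hothers hnbrs hwk hwk'
                (fun l hl _ hli => hl.1 (by rw [hli]; rfl))
                (fun l hl _ hli => hl.1 (by rw [hli]; rfl))
            have e2 : R.w (k'+1) = R'.w (k'+1) :=
              w_next_eq hothers hnbrs R R' hik hik' hkt hkt' hagree
            have L1 : R.p q i = R.w (k'+1) - R.w k' := by rw [← hik, R.hpay1 q k' hkt]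
            have L2 : R'.p q i = R'.w (k'+1) - R'.w k' := by rw [← hik', R'.hpay1 q k' hkt']
            rw [L1, L2, e1, e2]
          · exact absurd (hkt' ▸ hik') h2
          · exact absurd (cross_impossible hothers' hnbrs' R' R hk' hk hik' hik
              (fun l hl => (hagree l hl).symm) hkt' hkt) (by simp)
        · exact absurd (hkt ▸ hik) h1
        · rcases lt_trichotomy k' R'.t with hkt' | hkt' | hkt'
          · exact absurd (cross_impossible hothers hnbrs R R' hk hk' hik hik'
              hagree hkt hkt') (by simp)
          · exact absurd (hkt' ▸ hik') h2
          · have L1 : R.p q i = 0 := by rw [← hik]; exact R.hpay3 q k' hkt hk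
            have L2 : R'.p q i = 0 := by rw [← hik']; exact R'.hpay3 q k' hkt' hk'
            rw [L1, L2]
      · push_neg at hin'
        have hz : R.p q i = 0 := payoff_zero hothers hnbrs R R' hin' h1 q
        have hz' : R'.p q i = 0 := R'.hpay4 q i hin'
        rw [hz, hz']
    · push_neg at hin
      by_cases hin' : ∃ k', k' < R'.m ∧ R'.seq k' = i
      · have hz : R.p q i = 0 := R.hpay4 q i hin
        have hz' : R'.p q i = 0 := payoff_zero hothers' hnbrs' R' R hin h2 q
        rw [hz, hz']
      · push_neg at hin'
        rw [R.hpay4 q i hin, R'.hpay4 q i hin']
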